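/- The principal series module $X(\nu)$ of the rank-one affine Hecke algebra (as a 2-dimensional representation with $T$ and $\theta$ acting by the explicit matrices above) is reducible if and only if $q^{\nu} \in \{ q^{\pm(\lambda+\lambda^*)/2},\; -q^{\pm(\lambda-\lambda^*)/2} \}$, i.e., $\nu \in \{ \pm\frac{\lambda+\lambda^*}{2},\; \pm\frac{\lambda-\lambda^*}{2} + \frac{\pi i}{\log q} \}$ modulo $2\pi i / \log q$. -/

import Mathlib

set_option maxHeartbeats 1000000

/-- The principal series `X(ν)` (the 2-dimensional representation of
the rank-one affine Hecke algebra given by the explicit matrices `T`, `θ`) is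
reducible — i.e. admits a nonzero proper invariant subspace — iff
`q^ν ∈ {q^((λ+λ*)/2), q^(-(λ+λ*)/2), -q^((λ-λ*)/2), -q^(-(λ-λ*)/2)}`. -/
theorem stmt11 (q lam lamstar : ℝ) (hq : 1 < q)
    (h0 : 0 < lamstar) (hl : lamstar < lam) (nu : ℂ) :
    let qp : ℂ → ℂ := fun z => Complex.exp (z * (Real.log q : ℂ))
    let Q : ℂ := qp (lam : ℂ)
    let c : ℂ := qp (((lam + lamstar) / 2 : ℝ) : ℂ) - qp (((lam - lamstar) / 2 : ℝ) : ℂ)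
    let T : Matrix (Fin 2) (Fin 2) ℂ := !![Q, 0; 0, -1]
    let th : Matrix (Fin 2) (Fin 2) ℂ :=
      (Q + 1)⁻¹ •
        !![qp ((lam : ℂ) - nu) + qp ((lam : ℂ) + nu) + c,
             qp ((lam : ℂ) - nu) - qp nu + c;
           qp (-nu) - qp ((lam : ℂ) + nu) - c,
             qp (-nu) + qp nu - c]
    (∃ W : Submodule ℂ (Fin 2 → ℂ), W ≠ ⊥ ∧ W ≠ ⊤ ∧
        (∀ v ∈ W, T.mulVec v ∈ W) ∧ (∀ v ∈ W, th.mulVec v ∈ W)) ↔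
      (qp nu = qp (((lam + lamstar) / 2 : ℝ) : ℂ) ∨
       qp nu = qp (-(((lam + lamstar) / 2 : ℝ) : ℂ)) ∨
       qp nu = -qp (((lam - lamstar) / 2 : ℝ) : ℂ) ∨
       qp nu = -qp (-(((lam - lamstar) / 2 : ℝ) : ℂ))) := by
  intro qp Q c T th
  have hqp_add : ∀ z w : ℂ, qp (z + w) = qp z * qp w := by
    intro z w; simp only [qp, add_mul, Complex.exp_add]
  have hqp_ne : ∀ z, qp z ≠ 0 := fun z => Complex.exp_ne_zero _
  have hqp_neg : ∀ z, qp (-z) = (qp z)⁻¹ := by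
    intro z; simp only [qp, neg_mul, Complex.exp_neg]
  -- abbreviations
  have ha : qp (((lam + lamstar) / 2 : ℝ) : ℂ) = qp (((lam + lamstar) / 2 : ℝ) : ℂ) := rfl
  set a : ℂ := qp (((lam + lamstar) / 2 : ℝ) : ℂ) with ha_def
  set b : ℂ := qp (((lam - lamstar) / 2 : ℝ) : ℂ) with hb_def
  set x : ℂ := qp nu with hx_def
  have hx0 : x ≠ 0 := hqp_ne nu
  have ha0 : a ≠ 0 := hqp_ne _
  have hb0 : b ≠ 0 := hqp_ne _
  have hc : c = a - b := rfl
  have hab : a * b = Q := by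
    have hsum : (((lam + lamstar) / 2 : ℝ) : ℂ) + (((lam - lamstar) / 2 : ℝ) : ℂ) = (lam : ℂ) := by
      push_cast; ring
    rw [ha_def, hb_def, ← hqp_add, hsum]
  have hQreal : Q = ((Real.exp (lam * Real.log q) : ℝ) : ℂ) := by
    show Complex.exp _ = _
    rw [show ((lam : ℂ) * (Real.log q : ℂ)) = (((lam * Real.log q : ℝ)) : ℂ) by push_cast; ring,
      Complex.ofReal_exp]
  have hQ1 : Q + 1 ≠ 0 := by
    rw [hQreal]
    intro h
    have : (Real.exp (lam * Real.log q) + 1 : ℝ) = 0 := by exact_mod_cast h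
    nlinarith [Real.exp_pos (lam * Real.log q)]
  have hQne : Q ≠ -1 := by
    intro h; apply hQ1; rw [h]; ring
  have hlmn : qp ((lam : ℂ) - nu) = Q * x⁻¹ := by
    rw [sub_eq_add_neg, hqp_add, hqp_neg]
  have hlpn : qp ((lam : ℂ) + nu) = Q * x := by
    rw [hqp_add]
  have hmn : qp (-nu) = x⁻¹ := hqp_neg nu
  -- the two off-diagonal vanishing conditions
  have E01 : qp ((lam : ℂ) - nu) - qp nu + c = 0 ↔ (x = a ∨ x = -b) := by
    rw [hlmn, hc]
    have expand : (x - a) * (x + b) = -((Q * x⁻¹ - x + (a - b)) * x) := by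
      rw [← hab]; field_simp; ring
    constructor
    · intro h
      have h2 : (x - a) * (x + b) = 0 := by rw [expand, h, zero_mul, neg_zero]
      rcases mul_eq_zero.mp h2 with h3 | h3
      · exact Or.inl (sub_eq_zero.mp h3)
      · exact Or.inr (eq_neg_of_add_eq_zero_left h3)
    · intro h
      have h2 : (x - a) * (x + b) = 0 := by
        rcases h with h | h <;> rw [h] <;> ring
      rw [expand] at h2
      have h3 : (Q * x⁻¹ - x + (a - b)) * x = 0 := by linear_combination -h2
      rcases mul_eq_zero.mp h3 with h4 | h4
      · exact h4
      · exact absurd h4 hx0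
  have E10 : qp (-nu) - qp ((lam : ℂ) + nu) - c = 0 ↔ (x = a⁻¹ ∨ x = -b⁻¹) := by
    rw [hmn, hlpn, hc]
    have expand : (a * x - 1) * (b * x + 1) = -((x⁻¹ - Q * x - (a - b)) * x) := by
      rw [← hab]; field_simp; ring
    constructor
    · intro h
      have h2 : (a * x - 1) * (b * x + 1) = 0 := by rw [expand, h, zero_mul, neg_zero]
      rcases mul_eq_zero.mp h2 with h3 | h3
      · left
        exact eq_inv_of_mul_eq_one_left (by linear_combination h3)
      · right
        exact neg_eq_iff_eq_neg.mp (eq_inv_of_mul_eq_one_left (show (-x) * b = 1 by linear_combination -h3))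
    · intro h
      have h2 : (a * x - 1) * (b * x + 1) = 0 := by
        rcases h with h | h <;> rw [h] <;> field_simp <;> ring
      rw [expand] at h2
      have h3 : (x⁻¹ - Q * x - (a - b)) * x = 0 := by linear_combination -h2
      rcases mul_eq_zero.mp h3 with h4 | h4
      · exact h4
      · exact absurd h4 hx0
  -- matrix definitional equalities
  have hT_def : T = !![Q, 0; 0, -1] := rfl
  set D01 : ℂ := qp ((lam : ℂ) - nu) - qp nu + c with hD01_def
  set D10 : ℂ := qp (-nu) - qp ((lam : ℂ) + nu) - c with hD10_def
  have hth_def : th = (Q + 1)⁻¹ •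
      !![qp ((lam : ℂ) - nu) + qp ((lam : ℂ) + nu) + c, D01;
         D10, qp (-nu) + qp nu - c] := rfl
  have hQ1' : (Q + 1)⁻¹ ≠ 0 := inv_ne_zero hQ1
  have main : (∃ W : Submodule ℂ (Fin 2 → ℂ), W ≠ ⊥ ∧ W ≠ ⊤ ∧
        (∀ v ∈ W, T.mulVec v ∈ W) ∧ (∀ v ∈ W, th.mulVec v ∈ W)) ↔
      (D10 = 0 ∨ D01 = 0) := by
    constructor
    · rintro ⟨W, hWb, hWt, hTW, hthW⟩
      have hfin : Module.finrank ℂ W = 1 := by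
        have h2 : Module.finrank ℂ W < 2 := by
          have := Submodule.finrank_lt (K := ℂ) (V := Fin 2 → ℂ) hWt
          simpa using this
        have h1 : Module.finrank ℂ W ≠ 0 := by
          rw [Ne, Submodule.finrank_eq_zero]; exact hWb
        omega
      obtain ⟨⟨v, hvW⟩, hv0, hgen⟩ := finrank_eq_one_iff'.mp hfin
      have hvne : v ≠ 0 := fun h => hv0 (Subtype.ext h)
      obtain ⟨k, hk⟩ := hgen ⟨T.mulVec v, hTW v hvW⟩
      have hk' : k • v = T.mulVec v := congrArg Subtype.val hk
      have hTv : T.mulVec v = ![Q * v 0, -(v 1)] := by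
        rw [hT_def]
        funext i; fin_cases i <;>
          simp [Matrix.mulVec, dotProduct, Fin.sum_univ_two]
      rw [hTv] at hk'
      have hk0 : k * v 0 = Q * v 0 := by
        have := congrFun hk' 0; simpa using this
      have hk1 : k * v 1 = -(v 1) := by
        have := congrFun hk' 1; simpa using this
      obtain ⟨m, hm⟩ := hgen ⟨th.mulVec v, hthW v hvW⟩
      have hm' : m • v = th.mulVec v := congrArg Subtype.val hm
      have hthv : th.mulVec v =
          ![(Q + 1)⁻¹ * ((qp ((lam : ℂ) - nu) + qp ((lam : ℂ) + nu) + c) * v 0 + D01 * v 1),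
            (Q + 1)⁻¹ * (D10 * v 0 + (qp (-nu) + qp nu - c) * v 1)] := by
        rw [hth_def]
        funext i; fin_cases i <;>
          simp [Matrix.mulVec, dotProduct, Fin.sum_univ_two, Matrix.smul_apply] <;> ring
      rw [hthv] at hm'
      have hm0 : m * v 0 = (Q + 1)⁻¹ * ((qp ((lam : ℂ) - nu) + qp ((lam : ℂ) + nu) + c) * v 0 + D01 * v 1) := by
        have := congrFun hm' 0; simpa using this
      have hm1 : m * v 1 = (Q + 1)⁻¹ * (D10 * v 0 + (qp (-nu) + qp nu - c) * v 1) := by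
        have := congrFun hm' 1; simpa using this
      have hcases : v 1 = 0 ∨ v 0 = 0 := by
        by_contra hcon
        push_neg at hcon
        have e0 : k = Q := mul_right_cancel₀ hcon.2 (by linear_combination hk0)
        have e1 : k = -1 := mul_right_cancel₀ hcon.1 (by linear_combination hk1)
        exact hQne (e0 ▸ e1)
      rcases hcases with hv1 | hv00
      · -- v 1 = 0, so span of e0; D10 = 0
        have hv0ne : v 0 ≠ 0 := by
          intro h; apply hvne; funext i; fin_cases i <;> simp [h, hv1]
        left
        rw [hv1] at hm1
        have : (Q + 1)⁻¹ * (D10 * v 0) = 0 := by linear_combination -hm1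
        rcases mul_eq_zero.mp this with h | h
        · exact absurd h hQ1'
        · rcases mul_eq_zero.mp h with h' | h'
          · exact h'
          · exact absurd h' hv0ne
      · -- v 0 = 0; D01 = 0
        have hv1ne : v 1 ≠ 0 := by
          intro h; apply hvne; funext i; fin_cases i <;> simp [h, hv00]
        right
        rw [hv00] at hm0
        have : (Q + 1)⁻¹ * (D01 * v 1) = 0 := by linear_combination -hm0
        rcases mul_eq_zero.mp this with h | h
        · exact absurd h hQ1'
        · rcases mul_eq_zero.mp h with h' | h'
          · exact h'
          · exact absurd h' hv1ne
    · intro hcase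
      rcases hcase with h10 | h01
      · refine ⟨Submodule.span ℂ {![1, 0]}, ?_, ?_, ?_, ?_⟩
        · rw [Ne, Submodule.span_singleton_eq_bot]
          intro h
          have := congrFun h 0; simp at this
        · intro h
          have hmem : (![0, 1] : Fin 2 → ℂ) ∈ Submodule.span ℂ {![1, 0]} := h ▸ Submodule.mem_top
          obtain ⟨kk, hkk⟩ := Submodule.mem_span_singleton.mp hmem
          have := congrFun hkk 1; simp at this
        · intro w hw
          obtain ⟨kk, hkk⟩ := Submodule.mem_span_singleton.mp hw
          rw [← hkk, Matrix.mulVec_smul]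
          refine Submodule.smul_mem _ _ ?_
          have : T.mulVec ![1, 0] = Q • ![1, 0] := by
            rw [hT_def]; funext i; fin_cases i <;>
              simp [Matrix.mulVec, dotProduct, Fin.sum_univ_two]
          rw [this]
          exact Submodule.smul_mem _ _ (Submodule.mem_span_singleton_self _)
        · intro w hw
          obtain ⟨kk, hkk⟩ := Submodule.mem_span_singleton.mp hw
          rw [← hkk, Matrix.mulVec_smul]
          refine Submodule.smul_mem _ _ ?_
          have : th.mulVec ![1, 0] =
              ((Q + 1)⁻¹ * (qp ((lam : ℂ) - nu) + qp ((lam : ℂ) + nu) + c)) • ![1, 0] := by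
            rw [hth_def]; funext i; fin_cases i <;>
              simp [Matrix.mulVec, dotProduct, Fin.sum_univ_two, Matrix.smul_apply, h10]
          rw [this]
          exact Submodule.smul_mem _ _ (Submodule.mem_span_singleton_self _)
      · refine ⟨Submodule.span ℂ {![0, 1]}, ?_, ?_, ?_, ?_⟩
        · rw [Ne, Submodule.span_singleton_eq_bot]
          intro h
          have := congrFun h 1; simp at this
        · intro h
          have hmem : (![1, 0] : Fin 2 → ℂ) ∈ Submodule.span ℂ {![0, 1]} := h ▸ Submodule.mem_top
          obtain ⟨kk, hkk⟩ := Submodule.mem_span_singleton.mp hmem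
          have := congrFun hkk 0; simp at this
        · intro w hw
          obtain ⟨kk, hkk⟩ := Submodule.mem_span_singleton.mp hw
          rw [← hkk, Matrix.mulVec_smul]
          refine Submodule.smul_mem _ _ ?_
          have : T.mulVec ![0, 1] = (-1 : ℂ) • ![0, 1] := by
            rw [hT_def]; funext i; fin_cases i <;>
              simp [Matrix.mulVec, dotProduct, Fin.sum_univ_two]
          rw [this]
          exact Submodule.smul_mem _ _ (Submodule.mem_span_singleton_self _)
        · intro w hw
          obtain ⟨kk, hkk⟩ := Submodule.mem_span_singleton.mp hw
          rw [← hkk, Matrix.mulVec_smul]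
          refine Submodule.smul_mem _ _ ?_
          have : th.mulVec ![0, 1] =
              ((Q + 1)⁻¹ * (qp (-nu) + qp nu - c)) • ![0, 1] := by
            rw [hth_def]; funext i; fin_cases i <;>
              simp [Matrix.mulVec, dotProduct, Fin.sum_univ_two, Matrix.smul_apply, h01]
          rw [this]
          exact Submodule.smul_mem _ _ (Submodule.mem_span_singleton_self _)
  rw [main, E10, E01, hqp_neg, hqp_neg, ← ha_def, ← hb_def]
  constructor
  · rintro ((h | h) | (h | h))
    · exact Or.inr (Or.inl h)
    · exact Or.inr (Or.inr (Or.inr h))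
    · exact Or.inl h
    · exact Or.inr (Or.inr (Or.inl h))
  · rintro (h | h | h | h)
    · exact Or.inr (Or.inl h)
    · exact Or.inl (Or.inl h)
    · exact Or.inr (Or.inr h)
    · exact Or.inl (Or.inr h)
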